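/- arXiv:1111.4201 — 2 statements merged into one kernel-verified Lean document; each statement's English description precedes it below -/
import Mathlib

section
/- Let Γ be a finite group, R a braided Hopf algebra in ^Γ_Γ𝒴𝒟, A = R#kΓ, and 𝒟 ⊆ A^e the subalgebra generated by the elements (r#g)⊗(s#g⁻¹) with r,s ∈ R, g ∈ Γ. Then 𝒟 is a left A-submodule of L(A^e) (A^e with left A-action via ρ(a) = a₁⊗S_A(a₂)) and a right A-submodule of R(A^e) (A^e with right A-action via ρ). -/
open scoped TensorProduct
open TensorProduct

noncomputable section

/-- `IsRepr k x a b` says that `∑ i, a i ⊗ b i` is a representation of the element `x`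
of a tensor product as a finite sum of pure tensors. -/
def IsRepr (k : Type) [CommRing k] {M N : Type} [AddCommGroup M] [Module k M]
    [AddCommGroup N] [Module k N] (x : M ⊗[k] N) {n : ℕ}
    (a : Fin n → M) (b : Fin n → N) : Prop :=
  x = ∑ i, a i ⊗ₜ[k] b i

end
open scoped TensorProduct
open TensorProduct

noncomputable section

variable (k Γ R : Type) [Field k] [Group Γ] [Fintype Γ] [DecidableEq Γ]
  [Ring R] [Algebra k R]

/-- A braided Hopf algebra `R` in the Yetter-Drinfeld category `{}^Γ_Γ\mathcal{YD}` over
the group algebra of a finite group `Γ`: a `Γ`-graded algebra (`proj g` is the projection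
onto the homogeneous component `R_g`) carrying a `Γ`-action by algebra automorphisms with
`h ⋅ R_g = R_{hgh⁻¹}`, together with a comultiplication, counit and antipode making it a
braided Hopf algebra, the braiding being `c(x ⊗ y) = (g ⋅ y) ⊗ x` for `x ∈ R_g`. -/
structure GammaBraidedHopf : Type where
  /-- the `Γ`-action by algebra automorphisms -/
  act : Γ →* (R ≃ₐ[k] R)
  /-- the projection onto the degree `g` homogeneous component -/
  proj : Γ → (R →ₗ[k] R)
  proj_sum : ∀ r : R, ∑ g : Γ, proj g r = r
  proj_proj : ∀ (g h : Γ) (r : R), proj g (proj h r) = if g = h then proj h r else 0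
  /-- the grading is an algebra grading: `R_g R_h ⊆ R_{gh}` -/
  proj_mul : ∀ (g h : Γ) (r s : R), proj g r = r → proj h s = s →
    proj (g * h) (r * s) = r * s
  proj_one_one : proj 1 1 = 1
  /-- compatibility of action and grading: `h ⋅ R_g = R_{hgh⁻¹}` -/
  act_proj : ∀ (h g : Γ) (r : R), proj g r = r →
    proj (h * g * h⁻¹) (act h r) = act h r
  /-- the comultiplication of `R` -/
  comulR : R →ₗ[k] R ⊗[k] R
  /-- the counit of `R` -/
  counitR : R →ₗ[k] k
  comulR_coassoc : ∀ (r : R) {n : ℕ} (r1 r2 : Fin n → R), IsRepr k (comulR r) r1 r2 →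
      ∑ i, (TensorProduct.assoc k R R R) (comulR (r1 i) ⊗ₜ[k] r2 i)
        = ∑ i, r1 i ⊗ₜ[k] comulR (r2 i)
  comulR_counit_left : ∀ (r : R) {n : ℕ} (r1 r2 : Fin n → R), IsRepr k (comulR r) r1 r2 →
      ∑ i, counitR (r1 i) • r2 i = r
  comulR_counit_right : ∀ (r : R) {n : ℕ} (r1 r2 : Fin n → R), IsRepr k (comulR r) r1 r2 →
      ∑ i, counitR (r2 i) • r1 i = r
  /-- `Δ_R` is an algebra map for the braided multiplication on `R ⊗ R`:
  `Δ_R(rs) = Σ_g (r¹ (g ⋅ s¹)) ⊗ ((r²)_g s²)` -/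
  comulR_braided_mul : ∀ (r s : R) {n : ℕ} (r1 r2 : Fin n → R) {m : ℕ}
      (s1 s2 : Fin m → R),
    IsRepr k (comulR r) r1 r2 → IsRepr k (comulR s) s1 s2 →
      comulR (r * s) = ∑ i, ∑ i', ∑ g : Γ,
        (r1 i * act g (s1 i')) ⊗ₜ[k] (proj g (r2 i) * s2 i')
  comulR_one : comulR 1 = 1 ⊗ₜ[k] 1
  counitR_mul : ∀ r s : R, counitR (r * s) = counitR r * counitR s
  counitR_one : counitR 1 = 1
  /-- the comultiplication is `Γ`-equivariant -/
  comulR_equivariant : ∀ (h : Γ) (r : R),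
    comulR (act h r)
      = TensorProduct.map (act h).toLinearMap (act h).toLinearMap (comulR r)
  counitR_equivariant : ∀ (h : Γ) (r : R), counitR (act h r) = counitR r
  /-- the comultiplication is graded: `Δ_R(R_g) ⊆ ⊕_{st = g} R_s ⊗ R_t` -/
  comulR_graded : ∀ (g : Γ) (r : R), proj g r = r → ∀ s t : Γ, s * t ≠ g →
    TensorProduct.map (proj s) (proj t) (comulR r) = 0
  counitR_graded : ∀ (g : Γ) (r : R), g ≠ 1 → counitR (proj g r) = 0
  /-- the antipode of `R` -/
  antipodeR : R →ₗ[k] R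
  antipodeR_left : ∀ (r : R) {n : ℕ} (r1 r2 : Fin n → R), IsRepr k (comulR r) r1 r2 →
      ∑ i, antipodeR (r1 i) * r2 i = counitR r • (1 : R)
  antipodeR_right : ∀ (r : R) {n : ℕ} (r1 r2 : Fin n → R), IsRepr k (comulR r) r1 r2 →
      ∑ i, r1 i * antipodeR (r2 i) = counitR r • (1 : R)

variable (A : Type) [Ring A] [HopfAlgebra k A]

/-- The Radford biproduct (bosonization) `A = R # kΓ` of a braided Hopf algebra `R` in
`{}^Γ_Γ\mathcal{YD}`: the Hopf algebra `A` is identified, via the `k`-linear isomorphism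
`e`, with `R ⊗ kΓ`, in such a way that the multiplication, unit, comultiplication and
counit of `A` are the ones of the Radford biproduct. -/
structure GammaBosonization extends GammaBraidedHopf k Γ R : Type where
  /-- the identification of `A` with `R ⊗ kΓ`. -/
  e : R ⊗[k] MonoidAlgebra k Γ ≃ₗ[k] A
  e_one : e (1 ⊗ₜ[k] MonoidAlgebra.single 1 1) = 1
  /-- `(r # g)(s # h) = r (g ⋅ s) # gh` -/
  e_mul : ∀ (r s : R) (g h : Γ),
    e (r ⊗ₜ[k] MonoidAlgebra.single g 1) * e (s ⊗ₜ[k] MonoidAlgebra.single h 1)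
      = e ((r * act g s) ⊗ₜ[k] MonoidAlgebra.single (g * h) 1)
  e_counit : ∀ (r : R) (h : Γ),
    Coalgebra.counit (R := k) (e (r ⊗ₜ[k] MonoidAlgebra.single h 1)) = counitR r
  /-- `Δ_A(r # h) = Σ_g (r¹ # gh) ⊗ ((r²)_g # h)` -/
  e_comul : ∀ (r : R) (h : Γ) {n : ℕ} (r1 r2 : Fin n → R), IsRepr k (comulR r) r1 r2 →
    Coalgebra.comul (R := k) (e (r ⊗ₜ[k] MonoidAlgebra.single h 1))
      = ∑ i, ∑ g : Γ, e (r1 i ⊗ₜ[k] MonoidAlgebra.single (g * h) 1)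
          ⊗ₜ[k] e (proj g (r2 i) ⊗ₜ[k] MonoidAlgebra.single h 1)

end
noncomputable section

/-- The algebra embedding `ρ : A → A^e`, `ρ(a) = a₁ ⊗ S_A(a₂)`, of a Hopf algebra into
its enveloping algebra (here given as a `k`-linear map). -/
def hopfRho (k A : Type) [Field k] [Ring A] [HopfAlgebra k A] : A →ₗ[k] A ⊗[k] Aᵐᵒᵖ :=
  (TensorProduct.map LinearMap.id
      ((MulOpposite.opLinearEquiv k).toLinearMap ∘ₗ HopfAlgebra.antipode (R := k))) ∘ₗ
    Coalgebra.comul (R := k)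

end
noncomputable section

/-- The subalgebra `𝒟 ⊆ A^e` generated by the elements `(r # g) ⊗ (s # g⁻¹)`, for the
Radford biproduct `A = R # kΓ`. -/
def DSub (k Γ R A : Type) [Field k] [Group Γ] [Fintype Γ] [DecidableEq Γ]
    [Ring R] [Algebra k R] [Ring A] [HopfAlgebra k A]
    (B : GammaBosonization k Γ R A) : Subalgebra k (A ⊗[k] Aᵐᵒᵖ) :=
  Algebra.adjoin k {x | ∃ (r s : R) (g : Γ),
    x = B.e (r ⊗ₜ[k] MonoidAlgebra.single g 1)
        ⊗ₜ[k] MulOpposite.op (B.e (s ⊗ₜ[k] MonoidAlgebra.single g⁻¹ 1))}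

end
noncomputable section Aux

open Coalgebra

lemma exists_isRepr (k : Type) [Field k] {M N : Type} [AddCommGroup M] [Module k M]
    [AddCommGroup N] [Module k N] (x : M ⊗[k] N) :
    ∃ (n : ℕ) (a : Fin n → M) (b : Fin n → N), IsRepr k x a b := by
  obtain ⟨S, hS⟩ := TensorProduct.exists_finset x
  refine ⟨S.card, fun i => (S.equivFin.symm i).1.1, fun i => (S.equivFin.symm i).1.2, ?_⟩
  unfold IsRepr
  rw [hS, ← Finset.sum_coe_sort S (fun p => p.1 ⊗ₜ[k] p.2)]
  exact (S.equivFin.symm.sum_comp (fun p => p.1.1 ⊗ₜ[k] p.1.2)).symm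

lemma antipode_unique {k A : Type} [Field k] [Ring A] [HopfAlgebra k A] (S' : A →ₗ[k] A)
    (hS' : ∀ b : A, LinearMap.mul' k A (S'.lTensor A (Coalgebra.comul b)) =
      algebraMap k A (Coalgebra.counit b)) :
    S' = HopfAlgebra.antipode (R := k) := by
  have key : ∀ (b : A) (ι : Type) (repr : Coalgebra.Repr k b ι),
      ∑ i ∈ repr.index, repr.left i * S' (repr.right i) = algebraMap k A (Coalgebra.counit b) := by
    intro b ι repr
    have h := hS' b
    rw [← repr.eq] at h
    simpa [map_sum] using h
  ext a
  set S := HopfAlgebra.antipode (R := k) (A := A) with hSdef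
  set repr := Coalgebra.Repr.arbitrary k a with hrepr
  set a₁ : ∀ i : A × A, Coalgebra.Repr k (repr.left i) (A × A) :=
    fun i => Coalgebra.Repr.arbitrary k (repr.left i) with ha₁
  set a₂ : ∀ i : A × A, Coalgebra.Repr k (repr.right i) (A × A) :=
    fun i => Coalgebra.Repr.arbitrary k (repr.right i) with ha₂
  have coas := Coalgebra.sum_tmul_tmul_eq repr a₁ a₂
  set Φ : A ⊗[k] (A ⊗[k] A) →ₗ[k] A :=
    LinearMap.mul' k A ∘ₗ TensorProduct.map S (LinearMap.mul' k A ∘ₗ S'.lTensor A) with hΦdef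
  have hΦ : ∀ x y z : A, Φ (x ⊗ₜ[k] (y ⊗ₜ[k] z)) = S x * (y * S' z) := by
    intro x y z; simp [hΦdef, LinearMap.mul'_apply]
  have coas' := congrArg Φ coas
  simp only [map_sum, hΦ] at coas'
  have hL : ∑ i ∈ repr.index, ∑ j ∈ (a₁ i).index,
      S ((a₁ i).left j) * ((a₁ i).right j * S' (repr.right i)) = S' a := by
    have h1 : ∀ i ∈ repr.index, ∑ j ∈ (a₁ i).index,
        S ((a₁ i).left j) * ((a₁ i).right j * S' (repr.right i))
        = Coalgebra.counit (R := k) (repr.left i) • S' (repr.right i) := by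
      intro i _
      rw [Finset.sum_congr rfl (fun j _ => (mul_assoc _ _ _).symm), ← Finset.sum_mul,
        HopfAlgebra.sum_antipode_mul_eq_algebraMap_counit (a₁ i), ← Algebra.smul_def]
    rw [Finset.sum_congr rfl h1]
    simp only [← map_smul, ← map_sum]
    congr 1
    have h2 := Coalgebra.sum_counit_tmul_eq (R := k) repr
    have h3 := congrArg (TensorProduct.lid k A) h2
    simp only [map_sum, TensorProduct.lid_tmul, one_smul] at h3
    exact h3
  have hR : ∑ i ∈ repr.index, ∑ j ∈ (a₂ i).index,
      S (repr.left i) * ((a₂ i).left j * S' ((a₂ i).right j)) = S a := by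
    have h1 : ∀ i ∈ repr.index, ∑ j ∈ (a₂ i).index,
        S (repr.left i) * ((a₂ i).left j * S' ((a₂ i).right j))
        = Coalgebra.counit (R := k) (repr.right i) • S (repr.left i) := by
      intro i _
      rw [← Finset.mul_sum, key _ _ (a₂ i), ← Algebra.commutes, ← Algebra.smul_def]
    rw [Finset.sum_congr rfl h1]
    simp only [← map_smul, ← map_sum]
    congr 1
    have h2 := Coalgebra.sum_tmul_counit_eq (R := k) repr
    have h3 := congrArg (TensorProduct.rid k A) h2
    simp only [map_sum, TensorProduct.rid_tmul, one_smul] at h3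
    exact h3
  rw [hL, hR] at coas'
  exact coas'

variable {k Γ R A : Type} [Field k] [Group Γ] [Fintype Γ] [DecidableEq Γ]
  [Ring R] [Algebra k R] [Ring A] [HopfAlgebra k A] (B : GammaBosonization k Γ R A)

/-- The candidate antipode of `A = R # kΓ`. -/
def Smap : A →ₗ[k] A :=
  B.e.toLinearMap ∘ₗ
    (TensorProduct.lift
      ((Finsupp.lift (R →ₗ[k] R ⊗[k] MonoidAlgebra k Γ) k Γ (fun h =>
        ∑ g : Γ, ((TensorProduct.mk k R (MonoidAlgebra k Γ)).flip
            (MonoidAlgebra.single (h⁻¹ * g⁻¹) 1)) ∘ₗ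
          ((B.act (h⁻¹ * g⁻¹)).toLinearMap ∘ₗ (B.antipodeR ∘ₗ B.proj g)))).flip)) ∘ₗ
    (MonoidAlgebra.coeffLinearEquiv k).toLinearMap.lTensor R ∘ₗ
    B.e.symm.toLinearMap

lemma Smap_apply (r : R) (h : Γ) :
    Smap B (B.e (r ⊗ₜ[k] MonoidAlgebra.single h 1)) =
      ∑ g : Γ, B.e ((B.act (h⁻¹ * g⁻¹)) (B.antipodeR (B.proj g r)) ⊗ₜ[k]
        MonoidAlgebra.single (h⁻¹ * g⁻¹) 1) := by
  have h0 : B.e.symm (B.e (r ⊗ₜ[k] MonoidAlgebra.single h 1))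
      = r ⊗ₜ[k] MonoidAlgebra.single h 1 := B.e.symm_apply_apply _
  rw [Smap]
  simp only [LinearMap.coe_comp, Function.comp_apply, LinearEquiv.coe_coe]
  have h1 : (MonoidAlgebra.coeffLinearEquiv k) (MonoidAlgebra.single h (1 : k) : MonoidAlgebra k Γ)
      = Finsupp.single h (1 : k) := by
    simp [MonoidAlgebra.coeffLinearEquiv]
  rw [h0, LinearMap.lTensor_tmul, LinearEquiv.coe_coe, h1]
  erw [TensorProduct.lift.tmul, LinearMap.flip_apply, Finsupp.lift_apply]
  rw [Finsupp.sum_single_index (by simp), one_smul]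
  simp only [LinearMap.sum_apply, LinearMap.coe_comp, Function.comp_apply,
    LinearMap.flip_apply, TensorProduct.mk_apply, AlgEquiv.toLinearMap_apply, map_sum]

lemma Smap_apply_proj (g₀ : Γ) (s : R) (h : Γ) :
    Smap B (B.e (B.proj g₀ s ⊗ₜ[k] MonoidAlgebra.single h 1)) =
      B.e ((B.act (h⁻¹ * g₀⁻¹)) (B.antipodeR (B.proj g₀ s)) ⊗ₜ[k]
        MonoidAlgebra.single (h⁻¹ * g₀⁻¹) 1) := by
  rw [Smap_apply]
  rw [Finset.sum_eq_single g₀]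
  · rw [B.proj_proj g₀ g₀ s, if_pos rfl]
  · intro g _ hg
    rw [B.proj_proj g g₀ s, if_neg hg]
    simp
  · intro hmem
    exact absurd (Finset.mem_univ g₀) hmem

lemma act_act (u v : Γ) (x : R) : B.act u (B.act v x) = B.act (u * v) x := by
  rw [map_mul B.act u v, AlgEquiv.mul_apply]

lemma Smap_mul_comul (r : R) (h : Γ) :
    LinearMap.mul' k A ((Smap B).lTensor A
        (Coalgebra.comul (R := k) (B.e (r ⊗ₜ[k] MonoidAlgebra.single h 1)))) =
      algebraMap k A (Coalgebra.counit (R := k) (B.e (r ⊗ₜ[k] MonoidAlgebra.single h 1))) := by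
  obtain ⟨n, r1, r2, hrep⟩ := exists_isRepr k (B.comulR r)
  rw [B.e_comul r h r1 r2 hrep]
  simp only [map_sum, LinearMap.lTensor_tmul, LinearMap.mul'_apply]
  have step : ∀ (i : Fin n) (g : Γ),
      B.e (r1 i ⊗ₜ[k] MonoidAlgebra.single (g * h) 1) *
        Smap B (B.e (B.proj g (r2 i) ⊗ₜ[k] MonoidAlgebra.single h 1))
      = B.e ((r1 i * B.antipodeR (B.proj g (r2 i))) ⊗ₜ[k] MonoidAlgebra.single 1 1) := by
    intro i g
    rw [Smap_apply_proj, B.e_mul]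
    have h1 : (g * h) * ((g * h)⁻¹ * g⁻¹⁻¹) = g⁻¹⁻¹ := by group
    have hu : h⁻¹ * g⁻¹ = (g * h)⁻¹ := (mul_inv_rev g h).symm
    rw [hu, act_act, mul_inv_cancel, map_one, AlgEquiv.one_apply]
  rw [Finset.sum_congr rfl (fun i _ => Finset.sum_congr rfl (fun g _ => step i g))]
  have step2 : ∀ i : Fin n,
      ∑ g : Γ, B.e ((r1 i * B.antipodeR (B.proj g (r2 i))) ⊗ₜ[k] MonoidAlgebra.single 1 1)
      = B.e ((r1 i * B.antipodeR (r2 i)) ⊗ₜ[k] MonoidAlgebra.single 1 1) := by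
    intro i
    rw [← map_sum, ← TensorProduct.sum_tmul]
    rw [← Finset.mul_sum, ← map_sum, B.proj_sum (r2 i)]
  rw [Finset.sum_congr rfl (fun i _ => step2 i), ← map_sum, ← TensorProduct.sum_tmul,
    B.antipodeR_right r r1 r2 hrep, ← TensorProduct.smul_tmul', map_smul, B.e_one, B.e_counit,
    Algebra.algebraMap_eq_smul_one]

lemma Smap_eq_antipode : Smap B = HopfAlgebra.antipode (R := k) := by
  apply antipode_unique
  set f₁ : A →ₗ[k] A :=
    LinearMap.mul' k A ∘ₗ (Smap B).lTensor A ∘ₗ Coalgebra.comul with hf₁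
  set f₂ : A →ₗ[k] A := Algebra.linearMap k A ∘ₗ Coalgebra.counit with hf₂
  suffices hs : ∀ x : R ⊗[k] MonoidAlgebra k Γ, f₁ (B.e x) = f₂ (B.e x) by
    intro b
    have := hs (B.e.symm b)
    rw [B.e.apply_symm_apply] at this
    simpa [hf₁, hf₂] using this
  intro x
  induction x using TensorProduct.induction_on with
  | zero => simp
  | add x y hx hy => rw [map_add, map_add, map_add, hx, hy]
  | tmul r f =>
    induction f using MonoidAlgebra.induction_linear with
    | zero => rw [TensorProduct.tmul_zero, map_zero, map_zero, map_zero]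
    | add f g hf hg => rw [TensorProduct.tmul_add, map_add, map_add, map_add, hf, hg]
    | single g c =>
      have hc : (MonoidAlgebra.single g c : MonoidAlgebra k Γ) = c • MonoidAlgebra.single g 1 := by
        rw [MonoidAlgebra.smul_single, smul_eq_mul, mul_one]
      rw [hc, TensorProduct.tmul_smul, map_smul, map_smul, map_smul]
      congr 1
      have := Smap_mul_comul B r g
      simpa [hf₁, hf₂] using this

lemma rho_mem (a : A) : hopfRho k A a ∈ DSub k Γ R A B := by
  suffices hs : ∀ x : R ⊗[k] MonoidAlgebra k Γ, hopfRho k A (B.e x) ∈ DSub k Γ R A B by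
    have := hs (B.e.symm a)
    rwa [B.e.apply_symm_apply] at this
  intro x
  induction x using TensorProduct.induction_on with
  | zero => rw [map_zero, map_zero]; exact zero_mem _
  | add x y hx hy => rw [map_add, map_add]; exact add_mem hx hy
  | tmul r f =>
    induction f using MonoidAlgebra.induction_linear with
    | zero =>
      rw [TensorProduct.tmul_zero, map_zero, map_zero]; exact zero_mem _
    | add f g hf hg =>
      rw [TensorProduct.tmul_add, map_add, map_add]; exact add_mem hf hg
    | single h c =>
      have hc : (MonoidAlgebra.single h c : MonoidAlgebra k Γ) = c • MonoidAlgebra.single h 1 := by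
        rw [MonoidAlgebra.smul_single, smul_eq_mul, mul_one]
      rw [hc, TensorProduct.tmul_smul, map_smul, map_smul]
      refine Submodule.smul_mem (Subalgebra.toSubmodule (DSub k Γ R A B)) c ?_
      obtain ⟨n, r1, r2, hrep⟩ := exists_isRepr k (B.comulR r)
      have hexp : hopfRho k A (B.e (r ⊗ₜ[k] MonoidAlgebra.single h 1))
          = ∑ i : Fin n, ∑ g : Γ, B.e (r1 i ⊗ₜ[k] MonoidAlgebra.single (g * h) 1) ⊗ₜ[k]
              MulOpposite.op (Smap B (B.e (B.proj g (r2 i) ⊗ₜ[k] MonoidAlgebra.single h 1))) := by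
        rw [hopfRho, LinearMap.comp_apply, B.e_comul r h r1 r2 hrep, map_sum]
        simp only [map_sum, TensorProduct.map_tmul, LinearMap.id_coe, id_eq,
          LinearMap.coe_comp, Function.comp_apply, LinearEquiv.coe_coe,
          MulOpposite.coe_opLinearEquiv, ← Smap_eq_antipode B]
      rw [hexp]
      refine sum_mem fun i _ => sum_mem fun g _ => ?_
      rw [Smap_apply_proj]
      refine Algebra.subset_adjoin ?_
      exact ⟨r1 i, (B.act (h⁻¹ * g⁻¹)) (B.antipodeR (B.proj g (r2 i))), g * h,
        by rw [mul_inv_rev]⟩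

end Aux

/-- **Statement 8**.
Let `Γ` be a finite group, `R` a braided Hopf algebra in `{}^Γ_Γ\mathcal{YD}`,
`A = R # kΓ`, and `𝒟 ⊆ A^e` the subalgebra generated by the elements
`(r # g) ⊗ (s # g⁻¹)`.  Then `𝒟` is a left `A`-submodule of `L(A^e)` and a right
`A`-submodule of `R(A^e)`, the `A`-actions being through the embedding
`ρ(a) = a₁ ⊗ S_A(a₂)`. -/
theorem statement8 (k Γ R A : Type) [Field k] [CharZero k] [IsAlgClosed k]
    [Group Γ] [Fintype Γ] [DecidableEq Γ] [Ring R] [Algebra k R]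
    [Ring A] [HopfAlgebra k A] (B : GammaBosonization k Γ R A) :
    ∀ (a : A) (x : A ⊗[k] Aᵐᵒᵖ), x ∈ DSub k Γ R A B →
      hopfRho k A a * x ∈ DSub k Γ R A B ∧ x * hopfRho k A a ∈ DSub k Γ R A B := by
  intro a x hx
  exact ⟨mul_mem (rho_mem B a) hx, mul_mem hx (rho_mem B a)⟩
end

section
/- Let Γ be a finite group, R a braided Hopf algebra in ^Γ_Γ𝒴𝒟, A = R#kΓ, and 𝒟 ⊆ A^e the subalgebra generated by the elements (r#g)⊗(s#g⁻¹) with r,s ∈ R, g ∈ Γ. Then the map a⊗b⊗1 ↦ ab gives an isomorphism R(A^e) ⊗_A k ≅ A of left A^e-modules (where k is the trivial right A-module via the counit ε_A and R(A^e) is A^e with right A-action via ρ(a) = a₁⊗S_A(a₂)), and this isomorphism restricts to an isomorphism 𝒟 ⊗_A k ≅ R of left R^e-modules. -/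
open scoped TensorProduct
open TensorProduct

open scoped TensorProduct
open TensorProduct

noncomputable section AuxSt10

open MulOpposite

variable (k A : Type) [Field k] [Ring A] [HopfAlgebra k A]

abbrev muA : A ⊗[k] Aᵐᵒᵖ →ₗ[k] A :=
  (LinearMap.mul' k A) ∘ₗ
    (TensorProduct.map LinearMap.id (MulOpposite.opLinearEquiv k).symm.toLinearMap)

variable {k A}

@[simp] lemma muA_tmul (a : A) (b : Aᵐᵒᵖ) : muA k A (a ⊗ₜ[k] b) = a * b.unop := by
  simp [muA]

lemma exists_fin_repr {k' : Type} [Field k'] {M N : Type} [AddCommGroup M] [Module k' M]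
    [AddCommGroup N] [Module k' N] (x : M ⊗[k'] N) :
    ∃ (n : ℕ) (a : Fin n → M) (b : Fin n → N), x = ∑ i, a i ⊗ₜ[k'] b i := by
  obtain ⟨S, hS⟩ := TensorProduct.exists_finset x
  refine ⟨S.card, fun i => (S.equivFin.symm i).1.1, fun i => (S.equivFin.symm i).1.2, ?_⟩
  rw [hS, ← Finset.sum_coe_sort S (fun p => p.1 ⊗ₜ[k'] p.2)]
  exact (Equiv.sum_comp S.equivFin.symm
    (fun p => (p : M × N).1 ⊗ₜ[k'] (p : M × N).2)).symm

lemma muA_tmul_mul (c : A) (d : Aᵐᵒᵖ) (x : A ⊗[k] Aᵐᵒᵖ) :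
    muA k A ((c ⊗ₜ[k] d) * x) = c * muA k A x * d.unop := by
  induction x using TensorProduct.induction_on with
  | zero => simp
  | tmul a b => simp [Algebra.TensorProduct.tmul_mul_tmul, mul_assoc]
  | add x y hx hy =>
      rw [mul_add, map_add, hx, hy, map_add, mul_add, add_mul]

lemma muA_rho (a : A) :
    muA k A (hopfRho k A a) = algebraMap k A (Coalgebra.counit (R := k) a) := by
  have h : ∀ t : A ⊗[k] A,
      LinearMap.mul' k A ((TensorProduct.map LinearMap.id
          (MulOpposite.opLinearEquiv k).symm.toLinearMap)
        ((TensorProduct.map LinearMap.id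
          ((MulOpposite.opLinearEquiv k).toLinearMap ∘ₗ HopfAlgebra.antipode (R := k))) t))
      = LinearMap.mul' k A ((HopfAlgebra.antipode (R := k)).lTensor A t) := by
    intro t
    induction t using TensorProduct.induction_on with
    | zero => simp
    | tmul x y => simp
    | add x y hx hy => simp only [map_add, hx, hy]
  rw [hopfRho]
  simp only [LinearMap.comp_apply]
  rw [h, HopfAlgebra.mul_antipode_lTensor_comul_apply]

lemma antipode_one' : HopfAlgebra.antipode (R := k) (1 : A) = 1 := by
  have h := HopfAlgebra.mul_antipode_rTensor_comul_apply (R := k) (a := (1 : A))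
  simpa [Bialgebra.comul_one, Algebra.TensorProduct.one_def] using h

lemma rho_one : hopfRho k A (1 : A) = 1 := by
  simp [hopfRho, Bialgebra.comul_one, Algebra.TensorProduct.one_def, antipode_one']

lemma rho_algebraMap (x : k) :
    hopfRho k A (algebraMap k A x) = algebraMap k (A ⊗[k] Aᵐᵒᵖ) x := by
  rw [Algebra.algebraMap_eq_smul_one, map_smul, rho_one,
    ← Algebra.algebraMap_eq_smul_one]

lemma muA_mul_rho (x : A ⊗[k] Aᵐᵒᵖ) (a : A) :
    muA k A (x * hopfRho k A a) = Coalgebra.counit (R := k) a • muA k A x := by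
  induction x using TensorProduct.induction_on with
  | zero => simp
  | tmul c d =>
      rw [muA_tmul_mul, muA_rho, muA_tmul]
      rw [← Algebra.commutes, ← Algebra.smul_def, smul_mul_assoc]
  | add x y hx hy => rw [add_mul, map_add, hx, hy, map_add, smul_add]

lemma muA_mul_eq_zero (x y : A ⊗[k] Aᵐᵒᵖ) (hy : muA k A y = 0) :
    muA k A (x * y) = 0 := by
  induction x using TensorProduct.induction_on with
  | zero => simp
  | tmul c d => rw [muA_tmul_mul, hy, mul_zero, zero_mul]
  | add x z hx hz => rw [add_mul, map_add, hx, hz, add_zero]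

def Wmap (k A : Type) [Field k] [Ring A] [HopfAlgebra k A] (a : A) :
    A ⊗[k] (A ⊗[k] A) →ₗ[k] A ⊗[k] Aᵐᵒᵖ :=
  TensorProduct.map (LinearMap.mulLeft k a)
    ((MulOpposite.opLinearEquiv k).toLinearMap ∘ₗ LinearMap.mul' k A ∘ₗ
      (HopfAlgebra.antipode (R := k)).rTensor A)

@[simp] lemma Wmap_tmul (a x : A) (t : A ⊗[k] A) :
    Wmap k A a (x ⊗ₜ[k] t)
      = (a * x) ⊗ₜ[k]
          op (LinearMap.mul' k A ((HopfAlgebra.antipode (R := k)).rTensor A t)) := by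
  simp [Wmap]

set_option synthInstance.maxHeartbeats 1000000 in
set_option maxHeartbeats 1000000 in
lemma key_repr (a b : A) {ι : Type} [Fintype ι] (u v : ι → A)
    (h : Coalgebra.comul (R := k) b = ∑ i, u i ⊗ₜ[k] v i) :
    a ⊗ₜ[k] op b - (a * b) ⊗ₜ[k] op (1 : A)
      = ∑ i, (a ⊗ₜ[k] op (v i)) *
          hopfRho k A
            (algebraMap k A (Coalgebra.counit (R := k) (u i)) - u i) := by
  have hA : ∑ i, Coalgebra.counit (R := k) (u i) • v i = b := by
    have h2 := congrArg (TensorProduct.lid k A)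
      (congrArg (LinearMap.rTensor A (Coalgebra.counit (R := k))) h)
    simpa [map_sum] using h2.symm
  have hB2 : ∑ i, Coalgebra.counit (R := k) (v i) • u i = b := by
    have h2 := congrArg (TensorProduct.rid k A)
      (congrArg ((Coalgebra.counit (R := k)).lTensor A) h)
    simpa [map_sum] using h2.symm
  have hstep : ∀ i, (a ⊗ₜ[k] op (v i)) * hopfRho k A (u i)
      = Wmap k A a ((TensorProduct.assoc k A A A)
          ((Coalgebra.comul (R := k) (u i)) ⊗ₜ[k] v i)) := by
    intro i
    rw [hopfRho]
    simp only [LinearMap.comp_apply]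
    generalize Coalgebra.comul (R := k) (u i) = t
    induction t using TensorProduct.induction_on with
    | zero => simp
    | tmul x y => simp [Algebra.TensorProduct.tmul_mul_tmul]
    | add s t hs ht =>
        rw [map_add, mul_add, hs, ht, TensorProduct.add_tmul, map_add, map_add]
  have hB : ∑ i, (a ⊗ₜ[k] op (v i)) * hopfRho k A (u i)
      = (a * b) ⊗ₜ[k] op (1 : A) := by
    calc ∑ i, (a ⊗ₜ[k] op (v i)) * hopfRho k A (u i)
        = Wmap k A a ((TensorProduct.assoc k A A A)
            ((Coalgebra.comul (R := k)).rTensor A (Coalgebra.comul (R := k) b))) := by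
          rw [h, map_sum, ← LinearEquiv.coe_coe (TensorProduct.assoc k A A A),
            map_sum, map_sum]
          simp only [LinearMap.rTensor_tmul, LinearEquiv.coe_coe]
          exact Finset.sum_congr rfl fun i _ => hstep i
      _ = Wmap k A a ((Coalgebra.comul (R := k)).lTensor A (Coalgebra.comul (R := k) b)) := by
          rw [Coalgebra.coassoc_apply]
      _ = ∑ i, Coalgebra.counit (R := k) (v i) • ((a * u i) ⊗ₜ[k] op (1 : A)) := by
          rw [h, map_sum, map_sum]
          refine Finset.sum_congr rfl fun i _ => ?_
          rw [LinearMap.lTensor_tmul, Wmap_tmul,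
            HopfAlgebra.mul_antipode_rTensor_comul_apply, Algebra.algebraMap_eq_smul_one]
          rw [op_smul, tmul_smul]
      _ = (a * b) ⊗ₜ[k] op (1 : A) := by
          rw [← hB2, Finset.mul_sum, sum_tmul]
          exact Finset.sum_congr rfl fun i _ => by
            rw [mul_smul_comm, smul_tmul']
  rw [Finset.sum_congr rfl (fun i (_ : i ∈ Finset.univ) => by
        rw [map_sub, mul_sub, rho_algebraMap, ← Algebra.commutes, ← Algebra.smul_def]),
    Finset.sum_sub_distrib, hB]
  congr 1
  rw [← hA, Finset.op_sum, tmul_sum]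
  exact Finset.sum_congr rfl fun i _ => by rw [MulOpposite.op_smul, tmul_smul]

end AuxSt10


noncomputable section AuxSt10B

open MulOpposite

variable {k Γ R A : Type} [Field k] [Group Γ] [Fintype Γ] [DecidableEq Γ]
  [Ring R] [Algebra k R] [Ring A] [HopfAlgebra k A]

/-- The generating set of `𝒟`. -/
def Gset (B : GammaBosonization k Γ R A) : Set (A ⊗[k] Aᵐᵒᵖ) :=
  {x | ∃ (r s : R) (g : Γ),
    x = B.e (r ⊗ₜ[k] MonoidAlgebra.single g 1)
        ⊗ₜ[k] MulOpposite.op (B.e (s ⊗ₜ[k] MonoidAlgebra.single g⁻¹ 1))}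

lemma one_mem_Gset (B : GammaBosonization k Γ R A) : (1 : A ⊗[k] Aᵐᵒᵖ) ∈ Gset B := by
  refine ⟨1, 1, 1, ?_⟩
  rw [inv_one, B.e_one, MulOpposite.op_one]
  exact Algebra.TensorProduct.one_def

lemma mul_mem_Gset (B : GammaBosonization k Γ R A) {x y : A ⊗[k] Aᵐᵒᵖ}
    (hx : x ∈ Gset B) (hy : y ∈ Gset B) : x * y ∈ Gset B := by
  obtain ⟨r, s, g, rfl⟩ := hx
  obtain ⟨r', s', g', rfl⟩ := hy
  refine ⟨r * B.act g r', s' * B.act g'⁻¹ s, g * g', ?_⟩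
  rw [Algebra.TensorProduct.tmul_mul_tmul, ← MulOpposite.op_mul, B.e_mul, B.e_mul,
    mul_inv_rev]

/-- `Gset` as a submonoid. -/
def Gsub (B : GammaBosonization k Γ R A) : Submonoid (A ⊗[k] Aᵐᵒᵖ) where
  carrier := Gset B
  one_mem' := one_mem_Gset B
  mul_mem' := fun hx hy => mul_mem_Gset B hx hy

lemma mem_span_Gset (B : GammaBosonization k Γ R A) {x : A ⊗[k] Aᵐᵒᵖ}
    (hx : x ∈ DSub k Γ R A B) : x ∈ Submodule.span k (Gset B) := by
  have h1 : x ∈ Subalgebra.toSubmodule (Algebra.adjoin k (Gset B)) := hx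
  rw [Algebra.adjoin_eq_span] at h1
  have h2 : (Submonoid.closure (Gset B) : Set (A ⊗[k] Aᵐᵒᵖ)) = Gset B := by
    rw [show Submonoid.closure (Gset B) = Gsub B from Submonoid.closure_eq (Gsub B)]
    rfl
  rwa [h2] at h1

/-- The map `r ↦ r # 1`. -/
def Lmap (B : GammaBosonization k Γ R A) : R →ₗ[k] A :=
  B.e.toLinearMap ∘ₗ (TensorProduct.mk k R (MonoidAlgebra k Γ)).flip (MonoidAlgebra.single 1 1)

lemma gen_key (B : GammaBosonization k Γ R A) (r s : R) (g : Γ) :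
    B.e (r ⊗ₜ[k] MonoidAlgebra.single g 1)
        ⊗ₜ[k] MulOpposite.op (B.e (s ⊗ₜ[k] MonoidAlgebra.single g⁻¹ 1))
      - (B.e (r ⊗ₜ[k] MonoidAlgebra.single g 1) * B.e (s ⊗ₜ[k] MonoidAlgebra.single g⁻¹ 1))
          ⊗ₜ[k] MulOpposite.op (1 : A)
    ∈ Submodule.span k
        {z | ∃ y ∈ DSub k Γ R A B, ∃ a : A,
          Coalgebra.counit (R := k) a = 0 ∧ z = y * hopfRho k A a} := by
  obtain ⟨n, s1, s2, hre⟩ := exists_fin_repr (B.comulR s)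
  have hcom := B.e_comul s g⁻¹ s1 s2 hre
  have hrepr2 : Coalgebra.comul (R := k) (B.e (s ⊗ₜ[k] MonoidAlgebra.single g⁻¹ 1))
      = ∑ p : Fin n × Γ, B.e (s1 p.1 ⊗ₜ[k] MonoidAlgebra.single (p.2 * g⁻¹) 1)
          ⊗ₜ[k] B.e (B.proj p.2 (s2 p.1) ⊗ₜ[k] MonoidAlgebra.single g⁻¹ 1) := by
    rw [hcom]
    exact (Fintype.sum_prod_type' (fun i h =>
      B.e (s1 i ⊗ₜ[k] MonoidAlgebra.single (h * g⁻¹) 1)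
        ⊗ₜ[k] B.e (B.proj h (s2 i) ⊗ₜ[k] MonoidAlgebra.single g⁻¹ 1))).symm
  have hk := key_repr (B.e (r ⊗ₜ[k] MonoidAlgebra.single g 1))
    (B.e (s ⊗ₜ[k] MonoidAlgebra.single g⁻¹ 1)) _ _ hrepr2
  rw [hk]
  refine Submodule.sum_mem _ fun p _ => Submodule.subset_span ?_
  exact ⟨B.e (r ⊗ₜ[k] MonoidAlgebra.single g 1)
      ⊗ₜ[k] MulOpposite.op (B.e (B.proj p.2 (s2 p.1) ⊗ₜ[k] MonoidAlgebra.single g⁻¹ 1)),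
    Algebra.subset_adjoin ⟨r, B.proj p.2 (s2 p.1), g, rfl⟩, _,
    by rw [map_sub, Bialgebra.counit_algebraMap, sub_self], rfl⟩

end AuxSt10B

open scoped TensorProduct in
/-- **Statement 10** (Lemma `lem d`(b)).
For `A = R # kΓ`, the multiplication map `μ : A^e → A`, `a ⊗ b ↦ ab`, induces an
isomorphism `R(A^e) ⊗_A k ≅ A` of left `A^e`-modules (where the right `A`-action on
`A^e` is via `ρ(a) = a₁ ⊗ S_A(a₂)` and `k` is the trivial module):  `μ` is `A^e`-linear,
surjective, and its kernel is `A^e ⋅ ρ(ker ε_A)`.  Moreover this isomorphism restricts to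
an isomorphism `𝒟 ⊗_A k ≅ R`: `μ` maps `𝒟` onto `R # 1 ⊆ A` and its kernel on `𝒟` is
spanned by `𝒟 ⋅ ρ(ker ε_A)`. -/
theorem statement10 (k Γ R A : Type) [Field k] [CharZero k] [IsAlgClosed k]
    [Group Γ] [Fintype Γ] [DecidableEq Γ] [Ring R] [Algebra k R]
    [Ring A] [HopfAlgebra k A] (B : GammaBosonization k Γ R A) :
    -- `μ` is a morphism of left `A^e`-modules:
    (∀ (c d : A) (x : A ⊗[k] Aᵐᵒᵖ),
        ((LinearMap.mul' k A) ∘ₗ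
            (TensorProduct.map LinearMap.id (MulOpposite.opLinearEquiv k).symm.toLinearMap))
          ((c ⊗ₜ[k] MulOpposite.op d) * x)
        = c * (((LinearMap.mul' k A) ∘ₗ
            (TensorProduct.map LinearMap.id (MulOpposite.opLinearEquiv k).symm.toLinearMap))
            x) * d) ∧
    -- `μ` is surjective:
    Function.Surjective
      ((LinearMap.mul' k A) ∘ₗ
        (TensorProduct.map LinearMap.id (MulOpposite.opLinearEquiv k).symm.toLinearMap)) ∧
    -- the kernel of `μ` is `A^e ⋅ ρ(ker ε_A)`, i.e. `μ` induces `R(A^e) ⊗_A k ≅ A`: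
    (LinearMap.ker ((LinearMap.mul' k A) ∘ₗ
        (TensorProduct.map LinearMap.id (MulOpposite.opLinearEquiv k).symm.toLinearMap))
        : Set (A ⊗[k] Aᵐᵒᵖ))
      = (Submodule.span (A ⊗[k] Aᵐᵒᵖ)
          {y | ∃ (x : A ⊗[k] Aᵐᵒᵖ) (a : A),
            Coalgebra.counit (R := k) a = 0 ∧ y = x * hopfRho k A a} : Set _) ∧
    -- `μ` maps `𝒟` onto `R = R # 1 ⊆ A`:
    (((LinearMap.mul' k A) ∘ₗ
        (TensorProduct.map LinearMap.id (MulOpposite.opLinearEquiv k).symm.toLinearMap)) ''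
          (DSub k Γ R A B : Set (A ⊗[k] Aᵐᵒᵖ))
      = Set.range (fun r : R => B.e (r ⊗ₜ[k] MonoidAlgebra.single 1 1))) ∧
    -- and the kernel of `μ` on `𝒟` is spanned by `𝒟 ⋅ ρ(ker ε_A)`, i.e. the isomorphism
    -- restricts to `𝒟 ⊗_A k ≅ R`:
    ∀ x ∈ DSub k Γ R A B,
      (((LinearMap.mul' k A) ∘ₗ
          (TensorProduct.map LinearMap.id (MulOpposite.opLinearEquiv k).symm.toLinearMap)) x
        = 0
      ↔ x ∈ Submodule.span k
          {z | ∃ y ∈ DSub k Γ R A B, ∃ a : A,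
            Coalgebra.counit (R := k) a = 0 ∧ z = y * hopfRho k A a}) := by
  
  classical
  refine ⟨fun c d x => muA_tmul_mul c (MulOpposite.op d) x,
    fun a => ⟨a ⊗ₜ[k] MulOpposite.op 1, by
      show muA k A (a ⊗ₜ[k] MulOpposite.op 1) = a
      rw [muA_tmul, MulOpposite.unop_op, mul_one]⟩, ?_, ?_, ?_⟩
  · -- the kernel of μ
    have hker : ∀ z : A ⊗[k] Aᵐᵒᵖ,
        z - muA k A z ⊗ₜ[k] MulOpposite.op (1 : A) ∈
          Submodule.span (A ⊗[k] Aᵐᵒᵖ)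
            {y | ∃ (x : A ⊗[k] Aᵐᵒᵖ) (a : A),
              Coalgebra.counit (R := k) a = 0 ∧ y = x * hopfRho k A a} := by
      intro z
      induction z using TensorProduct.induction_on with
      | zero =>
          rw [map_zero, TensorProduct.zero_tmul, sub_zero]
          exact Submodule.zero_mem _
      | tmul c d =>
          obtain ⟨n, u, v, hre⟩ := exists_fin_repr (Coalgebra.comul (R := k) d.unop)
          have hk := key_repr c d.unop u v hre
          rw [MulOpposite.op_unop] at hk
          rw [muA_tmul, hk]
          exact Submodule.sum_mem _ fun i _ => Submodule.subset_span
            ⟨c ⊗ₜ[k] MulOpposite.op (v i), _,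
              by rw [map_sub, Bialgebra.counit_algebraMap, sub_self], rfl⟩
      | add x y hx hy =>
          rw [map_add, TensorProduct.add_tmul]
          have h3 : x + y - (muA k A x ⊗ₜ[k] MulOpposite.op (1 : A)
                + muA k A y ⊗ₜ[k] MulOpposite.op (1 : A))
              = (x - muA k A x ⊗ₜ[k] MulOpposite.op (1 : A))
                + (y - muA k A y ⊗ₜ[k] MulOpposite.op (1 : A)) := by abel
          rw [h3]
          exact Submodule.add_mem _ hx hy
    ext x
    simp only [SetLike.mem_coe]
    constructor
    · intro hx
      have h0 : muA k A x = 0 := hx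
      have hz := hker x
      rw [h0, TensorProduct.zero_tmul, sub_zero] at hz
      exact hz
    · intro hx
      show muA k A x = 0
      refine Submodule.span_induction (p := fun z _ => muA k A z = 0) ?_ ?_ ?_ ?_ hx
      · rintro y ⟨w, a, ha, rfl⟩
        beta_reduce
        rw [muA_mul_rho, ha, zero_smul]
      · exact map_zero _
      · intro p q _ _ hp hq
        beta_reduce
        rw [map_add]
        rw [show muA k A p = 0 from hp, show muA k A q = 0 from hq, add_zero]
      · intro c z _ hz
        beta_reduce
        rw [smul_eq_mul]
        exact muA_mul_eq_zero c z hz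
  · -- μ maps 𝒟 onto R # 1
    apply Set.Subset.antisymm
    · rintro y ⟨x, hx, rfl⟩
      suffices h : muA k A x ∈ LinearMap.range (Lmap B) by
        obtain ⟨r, hr⟩ := h
        exact ⟨r, hr⟩
      refine Submodule.span_induction
        (p := fun z _ => muA k A z ∈ LinearMap.range (Lmap B)) ?_ ?_ ?_ ?_
        (mem_span_Gset B hx)
      · rintro w ⟨r, s, g, rfl⟩
        beta_reduce
        refine ⟨r * B.act g s, ?_⟩
        rw [muA_tmul, MulOpposite.unop_op, B.e_mul, mul_inv_cancel]
        rfl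
      · beta_reduce
        rw [map_zero]; exact Submodule.zero_mem _
      · intro p q _ _ hp hq
        beta_reduce
        rw [map_add]; exact Submodule.add_mem _ hp hq
      · intro c z _ hz
        beta_reduce
        rw [map_smul]; exact Submodule.smul_mem _ _ hz
    · rintro y ⟨r, rfl⟩
      refine ⟨B.e (r ⊗ₜ[k] MonoidAlgebra.single 1 1)
          ⊗ₜ[k] MulOpposite.op (B.e (1 ⊗ₜ[k] MonoidAlgebra.single (1 : Γ)⁻¹ 1)),
        Algebra.subset_adjoin ⟨r, 1, 1, rfl⟩, ?_⟩
      show muA k A _ = _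
      rw [muA_tmul, MulOpposite.unop_op, inv_one, B.e_one, mul_one]
  · -- the kernel of μ on 𝒟
    intro x hx
    constructor
    · intro hx0
      have h0 : muA k A x = 0 := hx0
      have hclaim : ∀ z ∈ Submodule.span k (Gset B),
          z - muA k A z ⊗ₜ[k] MulOpposite.op (1 : A) ∈
            Submodule.span k
              {z | ∃ y ∈ DSub k Γ R A B, ∃ a : A,
                Coalgebra.counit (R := k) a = 0 ∧ z = y * hopfRho k A a} := by
        intro z hz
        refine Submodule.span_induction
          (p := fun z _ => z - muA k A z ⊗ₜ[k] MulOpposite.op (1 : A) ∈ _) ?_ ?_ ?_ ?_ hz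
        · rintro w ⟨r, s, g, rfl⟩
          beta_reduce
          rw [muA_tmul, MulOpposite.unop_op]
          exact gen_key B r s g
        · beta_reduce
          rw [map_zero, TensorProduct.zero_tmul, sub_zero]
          exact Submodule.zero_mem _
        · intro p q _ _ hp hq
          beta_reduce at hp hq ⊢
          rw [map_add, TensorProduct.add_tmul]
          have h3 : p + q - (muA k A p ⊗ₜ[k] MulOpposite.op (1 : A)
                + muA k A q ⊗ₜ[k] MulOpposite.op (1 : A))
              = (p - muA k A p ⊗ₜ[k] MulOpposite.op (1 : A))
                + (q - muA k A q ⊗ₜ[k] MulOpposite.op (1 : A)) := by abel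
          rw [h3]
          exact Submodule.add_mem _ hp hq
        · intro c z _ hz
          beta_reduce at hz ⊢
          rw [map_smul, ← TensorProduct.smul_tmul', ← smul_sub]
          exact Submodule.smul_mem _ _ hz
      have hz := hclaim x (mem_span_Gset B hx)
      rw [h0, TensorProduct.zero_tmul, sub_zero] at hz
      exact hz
    · intro hmem
      show muA k A x = 0
      refine Submodule.span_induction (p := fun z _ => muA k A z = 0) ?_ ?_ ?_ ?_ hmem
      · rintro w ⟨y, hy, a, ha, rfl⟩
        beta_reduce
        rw [muA_mul_rho, ha, zero_smul]
      · exact map_zero _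
      · intro p q _ _ hp hq
        beta_reduce
        rw [map_add]
        rw [show muA k A p = 0 from hp, show muA k A q = 0 from hq, add_zero]
      · intro c z _ hz
        rw [map_smul, hz, smul_zero]
end
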